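/- Let N ∈ ℕ, N ≥ 1, and let (x_i, v_i) : [0, ∞) → ℝ^d × ℝ^d, i = 1,…,N, be continuously differentiable curves solving the Cucker-Smale system ẋ_i(t) = v_i(t), v̇_i(t) = (1/N)∑_{j=1}^N φ(‖x_j(t) − x_i(t)‖)(v_j(t) − v_i(t)). Fix a coordinate k ∈ {1,…,d} and real numbers a ≤ b. If a ≤ v_{i,k}(0) ≤ b for every i = 1,…,N, then a ≤ v_{i,k}(t) ≤ b for every i and every t ≥ 0 (invariance of coordinate velocity boxes). -/

import Mathlib

open MeasureTheory Metric Set Filter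

lemma cs_aux {N : ℕ} (hN : 1 ≤ N) (w : Fin N → ℝ → ℝ) (c : Fin N → Fin N → ℝ → ℝ)
    (hc : ∀ i j t, 0 ≤ c i j t)
    (hw : ∀ i, ∀ t : ℝ, 0 ≤ t → HasDerivWithinAt (w i)
      ((N : ℝ)⁻¹ * ∑ j : Fin N, c i j t * (w j t - w i t)) (Set.Ici 0) t)
    (b : ℝ) (h0 : ∀ i, w i 0 ≤ b) :
    ∀ t : ℝ, 0 ≤ t → ∀ i, w i t ≤ b := by
  classical
  have hne : (Finset.univ : Finset (Fin N)).Nonempty := by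
    have : Nonempty (Fin N) := ⟨⟨0, hN⟩⟩
    exact Finset.univ_nonempty
  set f : ℝ → ℝ := fun t => Finset.univ.sup' hne (fun j => w j t) with hf_def
  -- continuity of each w i on Ici 0
  have hwc : ∀ i, ContinuousOn (w i) (Set.Ici 0) := fun i t ht =>
    ((hw i t ht).continuousWithinAt)
  have hfc : ContinuousOn f (Set.Ici 0) := by
    intro t ht
    exact Filter.Tendsto.finset_sup'_nhds_apply hne fun i _ => hwc i t ht
  -- the slope bound
  have key : ∀ t : ℝ, 0 ≤ t → ∀ r : ℝ, (0:ℝ) < r → ∃ᶠ z in nhdsWithin t (Set.Ioi t), slope f t z < r := by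
    intro t ht r hr
    by_contra hcon
    have hev : ∀ᶠ z in nhdsWithin t (Set.Ioi t), r ≤ slope f t z := by
      simpa only [not_lt, Filter.not_frequently] using hcon
    -- pick j frequently achieving the max
    have hex : ∃ j : Fin N, ∃ᶠ z in nhdsWithin t (Set.Ioi t),
        r ≤ slope f t z ∧ w j z = f z := by
      by_contra hj
      push_neg at hj
      have hj : ∀ j : Fin N, ∀ᶠ z in nhdsWithin t (Set.Ioi t), ¬(r ≤ slope f t z ∧ w j z = f z) :=
        fun j => (hj j).mono fun z hz => by tauto
      have hall : ∀ᶠ z in nhdsWithin t (Set.Ioi t), ∀ j : Fin N,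
          ¬(r ≤ slope f t z ∧ w j z = f z) := Filter.eventually_all.2 hj
      have : ∀ᶠ z in nhdsWithin t (Set.Ioi t), False := by
        filter_upwards [hall, hev] with z hz hrz
        obtain ⟨j, _, hj'⟩ := Finset.exists_mem_eq_sup' hne (fun j => w j z)
        exact hz j ⟨hrz, hj'.symm⟩
      obtain ⟨z, hz⟩ := this.exists; exact hz
    obtain ⟨j, hfreq⟩ := hex
    set F : Filter ℝ := nhdsWithin t (Set.Ioi t) ⊓ Filter.principal
      {z | r ≤ slope f t z ∧ w j z = f z} with hF_def
    have hFne : F.NeBot := Filter.frequently_iff_neBot.1 hfreq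
    have hFmem : ∀ᶠ z in F, r ≤ slope f t z ∧ w j z = f z :=
      Filter.eventually_inf_principal.2 (Filter.Eventually.of_forall fun z hz => hz)
    have hIoi : Set.Ioi t ⊆ Set.Ici (0:ℝ) := fun z hz => le_trans ht (le_of_lt hz)
    have hFle : F ≤ nhdsWithin t (Set.Ioi t) := inf_le_left
    have hFle0 : F ≤ nhdsWithin t (Set.Ici 0) :=
      le_trans hFle (nhdsWithin_mono t hIoi)
    -- w j t = f t
    have hwjt : w j t = f t := by
      have h1 : w j t ≤ f t := Finset.le_sup' (fun j => w j t) (Finset.mem_univ j)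
      have h2 : f t ≤ w j t := by
        have htend : Filter.Tendsto (fun z => f z - w j z) F (nhds (f t - w j t)) := by
          have hft : Filter.Tendsto f F (nhds (f t)) := (hfc t ht).mono_left hFle0
          have hwt : Filter.Tendsto (w j) F (nhds (w j t)) := (hwc j t ht).mono_left hFle0
          exact hft.sub hwt
        have hle : ∀ᶠ z in F, f z - w j z ≤ 0 := by
          filter_upwards [hFmem] with z hz
          simp [hz.2]
        have := le_of_tendsto htend hle
        linarith
      linarith
    -- slope of w j is ≥ r frequently, hence deriv ≥ r
    have hslope : ∀ᶠ z in F, r ≤ slope (w j) t z := by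
      filter_upwards [hFmem] with z hz
      have : slope f t z = slope (w j) t z := by
        simp only [slope_def_field, hz.2, hwjt]
      linarith [hz.1]
    have hderiv : r ≤ (N : ℝ)⁻¹ * ∑ l : Fin N, c j l t * (w l t - w j t) := by
      have htend : Filter.Tendsto (slope (w j) t) F
          (nhds ((N : ℝ)⁻¹ * ∑ l : Fin N, c j l t * (w l t - w j t))) := by
        have := (hasDerivWithinAt_iff_tendsto_slope).1 (hw j t ht)
        refine this.mono_left ?_
        refine le_trans hFle (nhdsWithin_mono t ?_)
        intro z hz
        exact ⟨hIoi hz, ne_of_gt hz⟩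
      exact ge_of_tendsto htend hslope
    -- but the derivative is ≤ 0
    have hdle : (N : ℝ)⁻¹ * ∑ l : Fin N, c j l t * (w l t - w j t) ≤ 0 := by
      apply mul_nonpos_of_nonneg_of_nonpos
      · positivity
      · apply Finset.sum_nonpos
        intro l _
        apply mul_nonpos_of_nonneg_of_nonpos (hc j l t)
        have : w l t ≤ f t := Finset.le_sup' (fun j => w j t) (Finset.mem_univ l)
        rw [← hwjt] at this
        linarith
    linarith
  -- apply the fencing theorem on [0, T]
  intro T hT i
  have hfTb : f T ≤ b := by
    have := image_le_of_liminf_slope_right_le_deriv_boundary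
      (f := f) (a := 0) (b := T) (B := fun _ => b) (B' := fun _ => 0)
      (hfc.mono Set.Icc_subset_Ici_self)
      (by
        simp only [hf_def]
        exact Finset.sup'_le hne _ fun j _ => h0 j)
      continuousOn_const
      (fun x _ => hasDerivWithinAt_const x _ b)
      (fun x hx r hr => key x hx.1 r hr)
    exact this (Set.mem_Icc.2 ⟨hT, le_refl T⟩)
  exact le_trans (Finset.le_sup' (fun j => w j T) (Finset.mem_univ i)) hfTb

theorem stmt17 {d N : ℕ} (hd : 0 < d) (hN : 1 ≤ N)
    (φ : ℝ → ℝ) (hφc : Continuous φ) (hφa : Antitone φ) (hφp : ∀ r : ℝ, 0 < φ r)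
    (x v : Fin N → ℝ → EuclideanSpace ℝ (Fin d))
    (hode : ∀ i : Fin N, ∀ t : ℝ, 0 ≤ t →
      HasDerivWithinAt (x i) (v i t) (Set.Ici 0) t
      ∧ HasDerivWithinAt (v i)
          ((N : ℝ)⁻¹ • ∑ j : Fin N, φ (‖x j t - x i t‖) • (v j t - v i t))
          (Set.Ici 0) t)
    (k : Fin d) (a b : ℝ) (hab : a ≤ b)
    (h0 : ∀ i : Fin N, a ≤ v i 0 k ∧ v i 0 k ≤ b) :
    ∀ t : ℝ, 0 ≤ t → ∀ i : Fin N, a ≤ v i t k ∧ v i t k ≤ b := by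
  have hcoord : ∀ i : Fin N, ∀ t : ℝ, 0 ≤ t →
      HasDerivWithinAt (fun s => v i s k)
        ((N : ℝ)⁻¹ * ∑ j : Fin N, φ (‖x j t - x i t‖) * (v j t k - v i t k))
        (Set.Ici 0) t := by
    intro i t ht
    have h := (hode i t ht).2
    have h2 := ((EuclideanSpace.proj k).hasFDerivAt.comp_hasDerivWithinAt t h)
    have h3 : HasDerivWithinAt (fun s => v i s k)
        ((EuclideanSpace.proj k) ((N : ℝ)⁻¹ • ∑ j : Fin N, φ (‖x j t - x i t‖) • (v j t - v i t)))
        (Set.Ici 0) t := h2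
    convert h3 using 1
    simp [PiLp.proj_apply, Finset.mul_sum]
  intro t ht i
  constructor
  · have := cs_aux hN (fun i s => -(v i s k)) (fun i j s => φ (‖x j s - x i s‖))
      (fun i j s => (hφp _).le)
      (fun i s hs => by
        have hh := (hcoord i s hs).neg
        convert hh using 1
        · rfl
        · rfl
        · rfl
        rw [← neg_mul, Finset.mul_sum, Finset.mul_sum]
        exact Finset.sum_congr rfl fun j _ => by ring)
      (-a) (fun i => by simpa using neg_le_neg (h0 i).1) t ht i
    have h2 : -(v i t k) ≤ -a := this
    linarith
  · exact cs_aux hN (fun i s => v i s k) (fun i j s => φ (‖x j s - x i s‖))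
      (fun i j s => (hφp _).le) hcoord b (fun i => (h0 i).2) t ht i
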